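/- arXiv:2008.05728 — 2 statements merged into one kernel-verified Lean document; each statement's English description precedes it below -/
import Mathlib

section
/- Let g(x) be a monic polynomial of degree n and f(x) a monic polynomial of degree m ≤ n over a field, with g = q·f + r, deg r < m. Define the reversals f_R(x) = x^m f(1/x), g_R(x) = x^n g(1/x), q_R(x) = x^{n−m} q(1/x). Let f̃_R(x) = ∑_{i=0}^{n−m} (1 − f_R(x))^i. Then the coefficient of x^j in f̃_R(x)·g_R(x) agrees with the coefficient of x^j in q_R(x) for every j ≤ n − m; consequently q_i equals the coefficient of x^{n−m−i} in f̃_R·g_R. -/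
open Polynomial Finset

theorem stmt11 {F : Type*} [Field F] (n m : ℕ) (g f : Polynomial F)
    (hg : g.Monic) (hf : f.Monic) (hgn : g.natDegree = n) (hfm : f.natDegree = m)
    (hmn : m ≤ n) :
    (∀ j : ℕ, j ≤ n - m →
        ((∑ i ∈ Finset.range (n - m + 1), (1 - f.reverse) ^ i) * g.reverse).coeff j
          = (g /ₘ f).reverse.coeff j) ∧
    (∀ i : ℕ, i ≤ n - m →
        (g /ₘ f).coeff i
          = ((∑ i ∈ Finset.range (n - m + 1), (1 - f.reverse) ^ i) * g.reverse).coeff (n - m - i)) := by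
  set k := n - m with hk
  set q := g /ₘ f with hqdef
  set T : Polynomial F := ∑ i ∈ Finset.range (k + 1), (1 - f.reverse) ^ i with hT
  -- q is monic of degree k
  have hqdeg : q.natDegree = k := by
    rw [hqdef, Polynomial.natDegree_divByMonic g hf, hgn, hfm]
  have hdegf_le : f.degree ≤ g.degree := by
    rw [Polynomial.degree_eq_natDegree hf.ne_zero, Polynomial.degree_eq_natDegree hg.ne_zero,
      hfm, hgn]
    exact_mod_cast hmn
  have hqlead : q.leadingCoeff = 1 := by
    rw [hqdef, Polynomial.leadingCoeff_divByMonic_of_monic hf hdegf_le, hg.leadingCoeff]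
  have hqmonic : q.Monic := hqlead
  -- f * q has degree n
  have hfq_deg : (f * q).natDegree = n := by
    rw [Polynomial.natDegree_mul' (by rw [hf.leadingCoeff, hqlead]; simp), hfm, hqdeg]
    omega
  -- reverse of product
  have hrev_mul : (f * q).reverse = f.reverse * q.reverse := by
    apply Polynomial.reverse_mul
    rw [hf.leadingCoeff, hqlead]; simp
  -- remainder
  have hsum : g %ₘ f + f * q = g := Polynomial.modByMonic_add_div g f
  have hrdeg : (g %ₘ f).degree < f.degree := Polynomial.degree_modByMonic_lt g hf
  -- key: low coefficients of g.reverse and (f.reverse * q.reverse) agree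
  have hlow : ∀ j ≤ k, g.reverse.coeff j = (f.reverse * q.reverse).coeff j := by
    intro j hj
    have h1 : g.reverse.coeff j = g.coeff (n - j) := by
      rw [Polynomial.coeff_reverse, hgn, Polynomial.revAt_le (by omega)]
    have h2 : (f.reverse * q.reverse).coeff j = (f * q).coeff (n - j) := by
      rw [← hrev_mul, Polynomial.coeff_reverse, hfq_deg, Polynomial.revAt_le (by omega)]
    have h3 : (g %ₘ f).coeff (n - j) = 0 := by
      apply Polynomial.coeff_eq_zero_of_degree_lt
      calc (g %ₘ f).degree < f.degree := hrdeg
        _ ≤ ((n - j : ℕ) : WithBot ℕ) := by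
            rw [Polynomial.degree_eq_natDegree hf.ne_zero, hfm]
            exact_mod_cast (by omega : m ≤ n - j)
    rw [h1, h2, ← hsum, Polynomial.coeff_add, h3, zero_add]
  -- divisibility
  have hXdvd1 : (Polynomial.X : Polynomial F) ^ (k + 1) ∣
      (g.reverse - f.reverse * q.reverse) := by
    rw [Polynomial.X_pow_dvd_iff]
    intro d hd
    rw [Polynomial.coeff_sub, hlow d (by omega), sub_self]
  have hXdvd2 : (Polynomial.X : Polynomial F) ^ (k + 1) ∣ (1 - f.reverse) ^ (k + 1) := by
    apply pow_dvd_pow_of_dvd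
    rw [Polynomial.X_dvd_iff, Polynomial.coeff_sub, Polynomial.coeff_one,
      Polynomial.coeff_zero_reverse, hf.leadingCoeff]
    simp
  have hgeom : T * f.reverse = 1 - (1 - f.reverse) ^ (k + 1) := by
    have := geom_sum_mul (1 - f.reverse) (k + 1)
    have h' : (1 - f.reverse) - 1 = -f.reverse := by ring
    rw [h'] at this
    rw [hT]
    linear_combination -this
  have hmain : (Polynomial.X : Polynomial F) ^ (k + 1) ∣ (T * g.reverse - q.reverse) := by
    have hdecomp : T * g.reverse - q.reverse
        = T * (g.reverse - f.reverse * q.reverse) - (1 - f.reverse) ^ (k + 1) * q.reverse := by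
      have : T * f.reverse * q.reverse = (1 - (1 - f.reverse) ^ (k + 1)) * q.reverse := by
        rw [hgeom]
      ring_nf
      ring_nf at this
      linear_combination this
    rw [hdecomp]
    exact dvd_sub (Dvd.dvd.mul_left hXdvd1 T) (Dvd.dvd.mul_right hXdvd2 q.reverse)
  have hcoeff : ∀ j ≤ k, (T * g.reverse).coeff j = q.reverse.coeff j := by
    intro j hj
    have := (Polynomial.X_pow_dvd_iff.mp hmain) j (by omega)
    rw [Polynomial.coeff_sub, sub_eq_zero] at this
    exact this
  constructor
  · exact hcoeff
  · intro i hi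
    rw [hcoeff (k - i) (by omega)]
    rw [Polynomial.coeff_reverse, hqdeg, Polynomial.revAt_le (by omega)]
    congr 1
    omega
end

section
/- Let A be the weighted adjacency matrix of a graph over a commutative ring, let x be a formal variable, and A_H = ∑_{i=0}^{k} (xA)^i over R[x]. If A' = A + Δ where Δ is supported on entries (u,v) with u ∈ U_i and v ∈ U_o for disjoint vertex sets U_i, U_o, then for vertices s,t ∉ U_i ∪ U_o, the coefficient of x^j (for j ≤ k) in ∑_{i=0}^{k}(xA')^i evaluated at (s,t) depends only on the entries of A_H restricted to ({s,t} ∪ U_i ∪ U_o) × ({s,t} ∪ U_i ∪ U_o) together with Δ. -/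
open Polynomial

private lemma coeff_walk {R : Type*} [CommRing R] {n k : ℕ}
    (M : Matrix (Fin n) (Fin n) R) (u v : Fin n) (j : ℕ) (hj : j ≤ k) :
    ((∑ i ∈ Finset.range (k + 1),
        ((Polynomial.X : Polynomial R) • M.map Polynomial.C) ^ i) u v).coeff j
      = (M ^ j) u v := by
  have hpow : ∀ i : ℕ, ((Polynomial.X : Polynomial R) • M.map Polynomial.C) ^ i
      = (Polynomial.X : Polynomial R) ^ i • (M ^ i).map Polynomial.C := by
    intro i
    rw [_root_.smul_pow]
    congr 1
    have := map_pow (Polynomial.C.mapMatrix :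
      Matrix (Fin n) (Fin n) R →+* Matrix (Fin n) (Fin n) (Polynomial R)) M i
    simpa [RingHom.mapMatrix_apply] using this.symm
  simp only [hpow, Matrix.sum_apply, Matrix.smul_apply, Matrix.map_apply,
    smul_eq_mul, Polynomial.finset_sum_coeff]
  have : ∀ i ∈ Finset.range (k + 1),
      ((Polynomial.X : Polynomial R) ^ i * Polynomial.C ((M ^ i) u v)).coeff j
        = if i = j then (M ^ j) u v else 0 := by
    intro i _
    rw [mul_comm, Polynomial.C_mul_X_pow_eq_monomial, Polynomial.coeff_monomial]
    split_ifs with h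
    · subst h; rfl
    · rfl
  rw [Finset.sum_congr rfl this, Finset.sum_ite_eq' (Finset.range (k + 1))]
  simp [Nat.lt_succ_of_le hj]

private lemma pow_add_expand {R : Type*} [CommRing R] {m : Type*} [Fintype m]
    [DecidableEq m] (M N : Matrix m m R) :
    ∀ j : ℕ, (M + N) ^ j
      = M ^ j + ∑ a ∈ Finset.range j, M ^ a * N * (M + N) ^ (j - 1 - a) := by
  intro j
  induction j with
  | zero => simp
  | succ j ih =>
    have : (M + N) ^ (j + 1) = M * (M + N) ^ j + N * (M + N) ^ j := by
      rw [pow_succ', add_mul]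
    rw [this]
    nth_rewrite 1 [ih]
    rw [mul_add, Finset.mul_sum]
    rw [Finset.sum_range_succ' (fun a => M ^ a * N * (M + N) ^ (j + 1 - 1 - a))]
    have h1 : ∀ a, M * (M ^ a * N * (M + N) ^ (j - 1 - a))
        = M ^ (a + 1) * N * (M + N) ^ (j + 1 - 1 - (a + 1)) := by
      intro a
      have h : j - (a + 1) = j - 1 - a := by omega
      simp [h, pow_succ', mul_assoc]
    have h2 : j + 1 - 1 - 0 = j := by omega
    simp only [h1, h2, pow_zero, one_mul, pow_succ']
    abel

/-- Hesse-style locality: the low-degree coefficients of the walk generating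
function of the updated matrix depend only on the restriction of the original
walk generating function to the affected vertices (plus `s`, `t`) and on `Δ`. -/
theorem stmt17 {R : Type*} [CommRing R] (n k : ℕ)
    (A B Δ : Matrix (Fin n) (Fin n) R)
    (Ui Uo : Finset (Fin n)) (hdisj : Disjoint Ui Uo)
    (hsupp : ∀ u v, Δ u v ≠ 0 → u ∈ Ui ∧ v ∈ Uo)
    (s t : Fin n) (hs : s ∉ Ui ∪ Uo) (ht : t ∉ Ui ∪ Uo)
    (hagree : ∀ u v : Fin n,
        u ∈ insert s (insert t (Ui ∪ Uo)) → v ∈ insert s (insert t (Ui ∪ Uo)) →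
        (∑ i ∈ Finset.range (k + 1),
            ((Polynomial.X : Polynomial R) • A.map Polynomial.C) ^ i) u v
          = (∑ i ∈ Finset.range (k + 1),
              ((Polynomial.X : Polynomial R) • B.map Polynomial.C) ^ i) u v) :
    ∀ j : ℕ, j ≤ k →
      ((∑ i ∈ Finset.range (k + 1),
          ((Polynomial.X : Polynomial R) • (A + Δ).map Polynomial.C) ^ i) s t).coeff j
        = ((∑ i ∈ Finset.range (k + 1),
            ((Polynomial.X : Polynomial R) • (B + Δ).map Polynomial.C) ^ i) s t).coeff j := by
  set S : Finset (Fin n) := insert s (insert t (Ui ∪ Uo)) with hS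
  have hsS : s ∈ S := Finset.mem_insert_self _ _
  have htS : t ∈ S := Finset.mem_insert_of_mem (Finset.mem_insert_self _ _)
  have hA : ∀ u ∈ S, ∀ v ∈ S, ∀ j : ℕ, j ≤ k → (A ^ j) u v = (B ^ j) u v := by
    intro u hu v hv j hj
    have h := congrArg (fun p => p.coeff j) (hagree u v hu hv)
    simpa only [coeff_walk _ _ _ _ hj] using h
  have key : ∀ j : ℕ, j ≤ k → ∀ v ∈ S, ((A + Δ) ^ j) v t = ((B + Δ) ^ j) v t := by
    intro j
    induction j using Nat.strong_induction_on with
    | _ j ih =>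
      intro hj v hv
      rw [pow_add_expand, pow_add_expand]
      simp only [Matrix.add_apply, Matrix.sum_apply]
      congr 1
      · exact hA v hv t htS j hj
      apply Finset.sum_congr rfl
      intro a ha
      rw [Finset.mem_range] at ha
      simp only [Matrix.mul_apply, Finset.sum_mul]
      apply Finset.sum_congr rfl
      intro w _
      apply Finset.sum_congr rfl
      intro u _
      by_cases hΔ : Δ u w = 0
      · simp [hΔ]
      · obtain ⟨hu, hw⟩ := hsupp u w hΔ
        have huS : u ∈ S := Finset.mem_insert_of_mem
          (Finset.mem_insert_of_mem (Finset.mem_union_left _ hu))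
        have hwS : w ∈ S := Finset.mem_insert_of_mem
          (Finset.mem_insert_of_mem (Finset.mem_union_right _ hw))
        rw [hA v hv u huS a (by omega),
          ih (j - 1 - a) (by omega) (by omega) w hwS]
  intro j hj
  rw [coeff_walk _ _ _ _ hj, coeff_walk _ _ _ _ hj]
  exact key j hj s hsS
end
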